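/- arXiv:1907.07515 — 4 statements merged into one kernel-verified Lean document; each statement's English description precedes it below -/
import Mathlib

section
/- Let (B_t)_{t≥0} be a standard one-dimensional Brownian motion and let z₀ > 0 and D > 0. Set C₃ = √D/(√π · z₀) and C₄ = z₀²/(4D). Then there exists t₀ > 0 such that for all t ∈ (0, t₀): P( sup_{s ∈ [0,t]} √(2D) · B_s < z₀ ) ≤ 1 − C₃ · t^{1/2} · e^{−C₄/t}. -/
open MeasureTheory ProbabilityTheory Filter Real

/-- A standard one-dimensional Brownian motion: it starts at `0`, has continuous sample
paths on `[0,∞)`, Gaussian increments `B t - B s ~ N(0, t - s)` for `0 ≤ s ≤ t`, and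
independent increments over any increasing sequence of nonnegative times. -/
def IsStdBM {Ω : Type*} [MeasurableSpace Ω] (P : Measure Ω) (B : ℝ → Ω → ℝ) : Prop :=
  (∀ t : ℝ, Measurable (B t)) ∧
  (∀ ω, B 0 ω = 0) ∧
  (∀ ω, ContinuousOn (fun t => B t ω) (Set.Ici 0)) ∧
  (∀ s t : ℝ, 0 ≤ s → s ≤ t →
    P.map (fun ω => B t ω - B s ω) = gaussianReal 0 (t - s).toNNReal) ∧
  (∀ (n : ℕ) (u : Fin (n + 1) → ℝ), (∀ i, 0 ≤ u i) → Monotone u →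
    iIndepFun
      (fun i : Fin n => fun ω => B (u i.succ) ω - B (u i.castSucc) ω) P)

/-- A family of stochastic processes is (mutually) independent if the σ-algebras
generated by the individual processes are independent. -/
def IndepProcs {Ω ι : Type*} [MeasurableSpace Ω] (P : Measure Ω)
    (B : ι → ℝ → Ω → ℝ) : Prop :=
  iIndep (fun i => MeasurableSpace.comap (fun ω => fun t => B i t ω) inferInstance) P

set_option maxHeartbeats 1000000

section SurvivalAux
open Set


lemma shift_integral (a : ℝ) (f : ℝ → ℝ) : ∫ x in Ioi a, f (x - a) = ∫ y in Ioi 0, f y := by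
  have h := (measurePreserving_add_right (volume : Measure ℝ) a).setIntegral_preimage_emb
    (measurableEmbedding_addRight a) (fun x => f (x - a)) (Ioi a)
  simpa using h.symm

lemma shift_integrableOn {a : ℝ} {f : ℝ → ℝ} (hf : IntegrableOn f (Ioi 0)) :
    IntegrableOn (fun x => f (x - a)) (Ioi a) := by
  have h := ((measurePreserving_add_right (volume : Measure ℝ) a).integrableOn_comp_preimage
    (measurableEmbedding_addRight a) (f := fun x => f (x - a)) (s := Ioi a))
  have e : ((· + a) ⁻¹' Ioi a) = Ioi (0:ℝ) := by ext x; simp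
  rw [e] at h
  exact h.mp (by simpa [Function.comp_def] using hf)

lemma int_exp (b : ℝ) (hb : 0 < b) : ∫ y in Ioi 0, rexp (-(b*y)) = 1/b := by
  have h := integral_rpow_mul_exp_neg_mul_Ioi (a := 1) (r := b) one_pos hb
  simp only [sub_self, rpow_zero, one_mul, Real.Gamma_one] at h
  rw [h, rpow_one, mul_one]

lemma int_sq_exp (b : ℝ) (hb : 0 < b) : ∫ y in Ioi 0, y^2 * rexp (-(b*y)) = 2/b^3 := by
  have h := integral_rpow_mul_exp_neg_mul_Ioi (a := 3) (r := b) (by norm_num) hb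
  have h3 : Real.Gamma 3 = 2 := by
    have := Real.Gamma_nat_eq_factorial 2
    norm_num at this; convert this using 2 <;> norm_num
  rw [h3] at h
  rw [show ∫ y in Ioi 0, y^2 * rexp (-(b*y)) = ∫ y in Ioi 0, y ^ ((3:ℝ)-1) * rexp (-(b*y)) from ?_, h]
  · rw [show (3:ℝ) = ((3:ℕ):ℝ) by norm_num, rpow_natCast]
    rw [div_pow, one_pow, div_mul_eq_mul_div, one_mul]
  · refine setIntegral_congr_fun measurableSet_Ioi (fun y hy => ?_)
    rw [show (3:ℝ)-1 = ((2:ℕ):ℝ) by norm_num, rpow_natCast]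

lemma int_sq_exp_integrable (b : ℝ) (hb : 0 < b) :
    IntegrableOn (fun y : ℝ => y^2 * rexp (-(b*y))) (Ioi 0) := by
  have h := integrableOn_rpow_mul_exp_neg_mul_rpow (s := 2) (p := 1) (by norm_num) one_pos hb
  refine h.congr_fun (fun y hy => ?_) measurableSet_Ioi
  dsimp only; rw [rpow_one, show (2:ℝ) = ((2:ℕ):ℝ) by norm_num, rpow_natCast, neg_mul]

lemma tail_integral_ge (v a : ℝ) (hv : 0 < v) (ha : 0 < a) :
    rexp (-a^2/(2*v)) * (v/a - v^2/a^3) ≤ ∫ x in Ioi a, rexp (-x^2/(2*v)) := by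
  set b := a / v with hbdef
  have hb : 0 < b := div_pos ha hv
  have hshift : ∫ x in Ioi a, rexp (-x^2/(2*v))
      = ∫ y in Ioi 0, rexp (-(y+a)^2/(2*v)) := by
    rw [← shift_integral a (fun u => rexp (-(u+a)^2/(2*v)))]
    exact setIntegral_congr_fun measurableSet_Ioi (fun x _ => by rw [sub_add_cancel])
  rw [hshift]
  have i1 : IntegrableOn (fun y : ℝ => rexp (-(b*y))) (Ioi 0) := by
    simpa [neg_mul] using exp_neg_integrableOn_Ioi 0 hb
  have i2 := int_sq_exp_integrable b hb
  -- lower bound function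
  have hpt : ∀ y ∈ Ioi (0:ℝ),
      rexp (-a^2/(2*v)) * (rexp (-(b*y)) - (1/(2*v)) * (y^2 * rexp (-(b*y))))
        ≤ rexp (-(y+a)^2/(2*v)) := by
    intro y hy
    have hexpand : -(y+a)^2/(2*v) = -a^2/(2*v) + (-(b*y)) + (-y^2/(2*v)) := by
      field_simp [hbdef]
      have hvb : v*b = a := by rw [hbdef]; field_simp
      linear_combination (2*y) * hvb
    rw [hexpand, Real.exp_add, Real.exp_add]
    have h1 : 1 - y^2/(2*v) ≤ rexp (-y^2/(2*v)) := by
      have h := Real.add_one_le_exp (-y^2/(2*v))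
      rw [neg_div] at h ⊢
      linarith
    have hpos : 0 < rexp (-a^2/(2*v)) * rexp (-(b*y)) := by positivity
    calc rexp (-a^2/(2*v)) * (rexp (-(b*y)) - (1/(2*v)) * (y^2 * rexp (-(b*y))))
        = (rexp (-a^2/(2*v)) * rexp (-(b*y))) * (1 - y^2/(2*v)) := by ring
      _ ≤ (rexp (-a^2/(2*v)) * rexp (-(b*y))) * rexp (-y^2/(2*v)) := by
          exact mul_le_mul_of_nonneg_left h1 hpos.le
  have hInt : IntegrableOn (fun y : ℝ =>
      rexp (-a^2/(2*v)) * (rexp (-(b*y)) - (1/(2*v)) * (y^2 * rexp (-(b*y))))) (Ioi 0) := by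
    exact ((i1.sub (i2.const_mul _)).const_mul _)
  have hIntTarget : IntegrableOn (fun y : ℝ => rexp (-(y+a)^2/(2*v))) (Ioi 0) := by
    have base : IntegrableOn (fun x : ℝ => rexp (-x^2/(2*v))) (Ioi a) := by
      have h := (integrable_exp_neg_mul_sq (b := (2*v)⁻¹) (by positivity)).integrableOn
        (s := Ioi a)
      refine h.congr_fun (fun x _ => ?_) measurableSet_Ioi
      dsimp only; rw [neg_div, neg_mul, inv_mul_eq_div]
    have h := ((measurePreserving_add_right (volume : Measure ℝ) a).integrableOn_comp_preimage
      (measurableEmbedding_addRight a) (f := fun x : ℝ => rexp (-x^2/(2*v))) (s := Ioi a))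
    have e : ((· + a) ⁻¹' Ioi a) = Ioi (0:ℝ) := by ext x; simp
    rw [e] at h
    exact h.mpr base
  have hmono := setIntegral_mono_on hInt hIntTarget measurableSet_Ioi hpt
  refine le_trans (le_of_eq ?_) hmono
  rw [integral_const_mul, integral_sub i1 (i2.const_mul _), integral_const_mul,
    int_exp b hb, int_sq_exp b hb]
  have hb3 : b^3 = a^3/v^3 := by rw [hbdef]; ring
  field_simp [hbdef]
  rw [← (show v*b = a by rw [hbdef]; field_simp)]; ring

lemma gaussianReal_Ici_ge (v a : ℝ) (hv : 0 < v) (ha : 0 < a) :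
    ENNReal.ofReal ((Real.sqrt (2*π*v))⁻¹ * (rexp (-a^2/(2*v)) * (v/a - v^2/a^3)))
      ≤ gaussianReal 0 v.toNNReal (Ici a) := by
  have hvne : v.toNNReal ≠ 0 := by simp [Real.toNNReal_eq_zero, not_le, hv]
  have hcoe : ((v.toNNReal : ℝ)) = v := Real.coe_toNNReal v hv.le
  rw [gaussianReal_apply_eq_integral 0 hvne]
  apply ENNReal.ofReal_le_ofReal
  have hpdf : ∀ x : ℝ, gaussianPDFReal 0 v.toNNReal x
      = (Real.sqrt (2*π*v))⁻¹ * rexp (-x^2/(2*v)) := by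
    intro x; rw [gaussianPDFReal]; rw [hcoe, sub_zero]
  have h1 : ∫ x in Ici a, gaussianPDFReal 0 v.toNNReal x
      = (Real.sqrt (2*π*v))⁻¹ * ∫ x in Ioi a, rexp (-x^2/(2*v)) := by
    rw [integral_Ici_eq_integral_Ioi]
    simp_rw [hpdf]
    rw [integral_const_mul]
  rw [h1]
  exact mul_le_mul_of_nonneg_left (tail_integral_ge v a hv ha) (by positivity)

lemma gaussianReal_Icc_ge (v b c M : ℝ) (hv : 0 < v) (hbc : b ≤ c)
    (hM : ∀ x ∈ Icc b c, x^2 ≤ M^2) :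
    ENNReal.ofReal ((c - b) * ((Real.sqrt (2*π*v))⁻¹ * rexp (-M^2/(2*v))))
      ≤ gaussianReal 0 v.toNNReal (Icc b c) := by
  have hvne : v.toNNReal ≠ 0 := by simp [Real.toNNReal_eq_zero, not_le, hv]
  have hcoe : ((v.toNNReal : ℝ)) = v := Real.coe_toNNReal v hv.le
  rw [gaussianReal_apply_eq_integral 0 hvne]
  apply ENNReal.ofReal_le_ofReal
  have hpt : ∀ x ∈ Icc b c, (Real.sqrt (2*π*v))⁻¹ * rexp (-M^2/(2*v))
      ≤ gaussianPDFReal 0 v.toNNReal x := by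
    intro x hx
    rw [gaussianPDFReal, hcoe, sub_zero]
    refine mul_le_mul_of_nonneg_left ?_ (by positivity)
    apply Real.exp_le_exp.mpr
    have := hM x hx
    have h2v : (0:ℝ) < 2*v := by linarith
    rw [div_le_div_iff₀ h2v h2v] at *
    nlinarith
  have hIc : IntegrableOn (fun _ : ℝ => (Real.sqrt (2*π*v))⁻¹ * rexp (-M^2/(2*v))) (Icc b c) := by
    exact integrableOn_const measure_Icc_lt_top.ne
  have hmono := setIntegral_mono_on hIc
    ((integrable_gaussianPDFReal 0 v.toNNReal).integrableOn) measurableSet_Icc hpt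
  refine le_trans (le_of_eq ?_) hmono
  rw [setIntegral_const, Real.volume_real_Icc_of_le hbc, smul_eq_mul]


lemma crux (a t : ℝ) (ha : 0 < a) (ht : 0 < t)
    (htt : t < a^2 * rexp (-8) / Real.sqrt (2*π)) :
    1/(Real.sqrt (2*π)) * (Real.sqrt t / a) * rexp (-a^2/(2*t))
      ≤ (Real.sqrt (2*π*t))⁻¹ * (rexp (-a^2/(2*t)) * (t/a - t^2/a^3))
        + (t/a * ((Real.sqrt (2*π*(t - t^2/a^2)))⁻¹ * rexp (-(a + t/a)^2/(2*(t - t^2/a^2)))))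
          * (t/a * ((Real.sqrt (2*π*(t^2/a^2)))⁻¹ * rexp (-(3*(t/a))^2/(2*(t^2/a^2))))) := by
  have hpi := Real.pi_gt_three
  have hsq2pi : (0:ℝ) < Real.sqrt (2*π) := by positivity
  have h4 : 1 ≤ Real.sqrt (2*π) := by
    rw [show (1:ℝ) = Real.sqrt 1 by simp]
    apply Real.sqrt_le_sqrt; linarith
  have hexp8 : rexp (-8) ≤ 1/2 := by
    have h2 : rexp (-8) ≤ rexp (-1) := by apply exp_le_exp.mpr; norm_num
    have h3 : rexp (-1) ≤ 1/2 := by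
      rw [exp_neg, inv_le_comm₀ (exp_pos 1) (by norm_num)]
      have := add_one_le_exp 1
      linarith
    linarith
  have h2t : 2*t ≤ a^2 := by
    have : a^2 * rexp (-8) / Real.sqrt (2*π) ≤ a^2 * (1/2) / 1 :=
      div_le_div₀ (by positivity) (mul_le_mul_of_nonneg_left hexp8 (sq_nonneg a)) one_pos h4
    nlinarith
  have hta : t / a^2 ≤ rexp (-8) / Real.sqrt (2*π) := by
    rw [div_le_div_iff₀ (by positivity) hsq2pi]
    rw [lt_div_iff₀ hsq2pi] at htt
    nlinarith
  have hδ : t^2/a^2 = (t/a)^2 := by ring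
  have hs : 0 < t - t^2/a^2 := by
    rw [hδ, div_pow]
    have h5 : t^2/a^2 ≤ t * (1/2) := by
      rw [div_le_iff₀ (by positivity)]
      nlinarith
    rw [← div_pow]
    nlinarith
  have h3f : (t/a * ((Real.sqrt (2*π*(t^2/a^2)))⁻¹ * rexp (-(3*(t/a))^2/(2*(t^2/a^2)))))
      = rexp (-(9/2)) / Real.sqrt (2*π) := by
    rw [hδ, show 2*π*(t/a)^2 = (2*π)*(t/a)^2 by ring,
      Real.sqrt_mul (by positivity), Real.sqrt_sq (by positivity)]
    rw [show -(3*(t/a))^2/(2*(t/a)^2) = -(9/2) by field_simp; ring]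
    field_simp
  rw [h3f]
  have hexpo : (a + t/a)^2/(2*(t - t^2/a^2)) ≤ a^2/(2*t) + 7/2 := by
    have key : (a^2+t)^2 ≤ (a^2+7*t)*(a^2-t) := by nlinarith
    have e1 : (a + t/a)^2 = (a^2+t)^2/a^2 := by field_simp
    have e2 : (a^2/(2*t)+7/2) * (2*(t - t^2/a^2)) = (a^2+7*t)*(a^2-t)/a^2 := by
      field_simp
    rw [div_le_iff₀ (by linarith : (0:ℝ) < 2*(t - t^2/a^2)), e1, e2]
    gcongr
  set E0 := rexp (-a^2/(2*t)) with hE0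
  set E1 := rexp (-(a + t/a)^2/(2*(t - t^2/a^2))) with hE1def
  set r1 := (Real.sqrt (2*π*t))⁻¹ with hr1
  set r2 := (Real.sqrt (2*π*(t - t^2/a^2)))⁻¹ with hr2
  have hr1pos : 0 < r1 := by rw [hr1]; positivity
  have hr2pos : 0 < r2 := by rw [hr2]; positivity
  have hE1 : E0 * rexp (-(7/2)) ≤ E1 := by
    rw [hE0, hE1def, ← Real.exp_add]
    apply exp_le_exp.mpr
    rw [neg_div, neg_div]
    linarith
  have hr12 : r1 ≤ r2 := by
    rw [hr1, hr2]
    apply inv_anti₀ (by positivity)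
    apply Real.sqrt_le_sqrt
    nlinarith [sq_nonneg (t/a), hδ]
  have ht' : Real.sqrt t * Real.sqrt t = t := Real.mul_self_sqrt ht.le
  have e0 : 1/(Real.sqrt (2*π)) * (Real.sqrt t / a) * E0 = r1 * (E0 * (t/a)) := by
    rw [hr1, Real.sqrt_mul (by positivity) t, mul_inv, ← ht']
    have hst : (0:ℝ) < Real.sqrt t := Real.sqrt_pos.mpr ht
    field_simp
    rw [Real.sqrt_sq hst.le]
  rw [e0]
  have key2 : r1 * (E0 * (t^2/a^3)) ≤ (t/a) * (r2 * E1) * (rexp (-(9/2))/Real.sqrt (2*π)) := by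
    have hE0pos : 0 < E0 := exp_pos _
    calc r1 * (E0 * (t^2/a^3)) = (t/a) * (r1 * E0) * (t/a^2) := by ring
      _ ≤ (t/a) * (r2 * E0) * (rexp (-8)/Real.sqrt (2*π)) := by
          gcongr <;> positivity
      _ = (t/a) * (r2 * (E0 * rexp (-(7/2)))) * (rexp (-(9/2))/Real.sqrt (2*π)) := by
          rw [show rexp (-8) = rexp (-(7/2)) * rexp (-(9/2)) by
            rw [← Real.exp_add]; norm_num]
          ring
      _ ≤ (t/a) * (r2 * E1) * (rexp (-(9/2))/Real.sqrt (2*π)) := by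
          gcongr

  have hsplit : E0 * (t/a) = E0 * (t/a - t^2/a^3) + E0 * (t^2/a^3) := by ring
  calc r1 * (E0 * (t/a)) = r1 * (E0 * (t/a - t^2/a^3)) + r1 * (E0 * (t^2/a^3)) := by ring
    _ ≤ r1 * (E0 * (t/a - t^2/a^3)) + (t/a) * (r2 * E1) * (rexp (-(9/2))/Real.sqrt (2*π)) := by
        linarith


theorem survival_upper_bound' {Ω : Type*} [MeasurableSpace Ω] (P : Measure Ω)
    [IsProbabilityMeasure P] (B : ℝ → Ω → ℝ)
    (hMeas : ∀ t : ℝ, Measurable (B t))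
    (hZero : ∀ ω, B 0 ω = 0)
    (hCont : ∀ ω, ContinuousOn (fun t => B t ω) (Set.Ici 0))
    (hLaw : ∀ s t : ℝ, 0 ≤ s → s ≤ t →
      P.map (fun ω => B t ω - B s ω) = gaussianReal 0 (t - s).toNNReal)
    (hIndep : ∀ (n : ℕ) (u : Fin (n + 1) → ℝ), (∀ i, 0 ≤ u i) → Monotone u →
      iIndepFun
        (fun i : Fin n => fun ω => B (u i.succ) ω - B (u i.castSucc) ω) P)
    (z₀ D : ℝ) (hz : 0 < z₀) (hD : 0 < D) :
    ∃ t₀ > (0:ℝ), ∀ t ∈ Set.Ioo (0:ℝ) t₀,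
      P {ω | (⨆ s : Set.Icc (0:ℝ) t, Real.sqrt (2 * D) * B s.1 ω) < z₀}
        ≤ ENNReal.ofReal (1 - (Real.sqrt D / (Real.sqrt π * z₀)) * t ^ ((1:ℝ)/2)
            * Real.exp (-(z₀ ^ 2 / (4 * D)) / t)) := by
  have hpi := Real.pi_gt_three
  have h2D : (0:ℝ) < 2*D := by linarith
  have hsqrt2D : (0:ℝ) < Real.sqrt (2*D) := Real.sqrt_pos.mpr h2D
  set a : ℝ := z₀ / Real.sqrt (2*D) with ha_def
  have ha : 0 < a := div_pos hz hsqrt2D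
  have hza : Real.sqrt (2*D) * a = z₀ := by
    rw [ha_def, mul_comm, div_mul_cancel₀ _ (ne_of_gt hsqrt2D)]
  refine ⟨a^2 * rexp (-8) / Real.sqrt (2*π), by positivity, ?_⟩
  intro t ht
  obtain ⟨ht0, ht1⟩ := ht
  -- basic bounds replicated from crux
  have hsq2pi : (0:ℝ) < Real.sqrt (2*π) := by positivity
  have h4 : 1 ≤ Real.sqrt (2*π) := by
    rw [show (1:ℝ) = Real.sqrt 1 by simp]
    apply Real.sqrt_le_sqrt; linarith
  have hexp8 : rexp (-8) ≤ 1/2 := by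
    have h2 : rexp (-8) ≤ rexp (-1) := by apply exp_le_exp.mpr; norm_num
    have h3 : rexp (-1) ≤ 1/2 := by
      rw [exp_neg, inv_le_comm₀ (exp_pos 1) (by norm_num)]
      have := add_one_le_exp 1
      linarith
    linarith
  have h2t : 2*t ≤ a^2 := by
    have : a^2 * rexp (-8) / Real.sqrt (2*π) ≤ a^2 * (1/2) / 1 :=
      div_le_div₀ (by positivity) (mul_le_mul_of_nonneg_left hexp8 (sq_nonneg a)) one_pos h4
    nlinarith
  have hsv : 0 < t - t^2/a^2 := by
    have h5 : t^2/a^2 ≤ t * (1/2) := by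
      rw [div_le_iff₀ (by positivity)]
      nlinarith
    nlinarith
  have hsvt : t - t^2/a^2 ≤ t := by
    have : 0 ≤ t^2/a^2 := by positivity
    linarith
  have hδpos : 0 < t^2/a^2 := by positivity
  have hεpos : 0 < t/a := by positivity
  -- the three random variables
  set X : Ω → ℝ := fun ω => B (t - t^2/a^2) ω - B 0 ω with hX_def
  set Y : Ω → ℝ := fun ω => B t ω - B (t - t^2/a^2) ω with hY_def
  set Z : Ω → ℝ := fun ω => B t ω - B 0 ω with hZ_def
  have hXm : Measurable X := (hMeas _).sub (hMeas 0)
  have hYm : Measurable Y := (hMeas t).sub (hMeas _)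
  have hZm : Measurable Z := (hMeas t).sub (hMeas 0)
  -- laws
  have hlawZ : P.map Z = gaussianReal 0 t.toNNReal := by
    have := hLaw 0 t le_rfl ht0.le
    rwa [sub_zero] at this
  have hlawX : P.map X = gaussianReal 0 (t - t^2/a^2).toNNReal := by
    have := hLaw 0 (t - t^2/a^2) le_rfl hsv.le
    rwa [sub_zero] at this
  have hlawY : P.map Y = gaussianReal 0 (t^2/a^2).toNNReal := by
    have := hLaw (t - t^2/a^2) t hsv.le hsvt
    rwa [sub_sub_cancel] at this
  -- events
  set A1 : Set Ω := Z ⁻¹' (Ici a) with hA1_def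
  set A2 : Set Ω := X ⁻¹' (Icc a (a + t/a)) ∩ Y ⁻¹' (Icc (-(3*(t/a))) (-(2*(t/a)))) with hA2_def
  have hA1m : MeasurableSet A1 := hZm measurableSet_Ici
  have hA2m : MeasurableSet A2 :=
    (hXm measurableSet_Icc).inter (hYm measurableSet_Icc)
  -- lower bound P A1
  have hPA1 : ENNReal.ofReal ((Real.sqrt (2*π*t))⁻¹
      * (rexp (-a^2/(2*t)) * (t/a - t^2/a^3))) ≤ P A1 := by
    have h := gaussianReal_Ici_ge t a ht0 ha
    rwa [← hlawZ, Measure.map_apply hZm measurableSet_Ici] at h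
  -- lower bound P A2 pieces
  have hPX : ENNReal.ofReal ((t/a) * ((Real.sqrt (2*π*(t - t^2/a^2)))⁻¹
      * rexp (-(a + t/a)^2/(2*(t - t^2/a^2))))) ≤ P (X ⁻¹' (Icc a (a + t/a))) := by
    have h := gaussianReal_Icc_ge (t - t^2/a^2) a (a + t/a) (a + t/a) hsv
      (by linarith) ?_
    · rw [← hlawX, Measure.map_apply hXm measurableSet_Icc] at h
      have e : a + t/a - a = t/a := by ring
      rwa [e] at h
    · intro x hx
      obtain ⟨hx1, hx2⟩ := hx
      nlinarith
  have hPY : ENNReal.ofReal ((t/a) * ((Real.sqrt (2*π*(t^2/a^2)))⁻¹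
      * rexp (-(3*(t/a))^2/(2*(t^2/a^2))))) ≤ P (Y ⁻¹' (Icc (-(3*(t/a))) (-(2*(t/a))))) := by
    have h := gaussianReal_Icc_ge (t^2/a^2) (-(3*(t/a))) (-(2*(t/a))) (3*(t/a)) hδpos
      (by linarith) ?_
    · rw [← hlawY, Measure.map_apply hYm measurableSet_Icc] at h
      have e : -(2*(t/a)) - -(3*(t/a)) = t/a := by ring
      rwa [e] at h
    · intro x hx
      obtain ⟨hx1, hx2⟩ := hx
      nlinarith
  -- independence
  have hIF : IndepFun X Y P := by
    have hi := hIndep 2 ![0, t - t^2/a^2, t] ?_ ?_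
    · have h := hi.indepFun (i := 0) (j := 1) (by decide)
      simpa using h
    · intro i; fin_cases i <;> simp [hsv.le, ht0.le]
    · rw [Fin.monotone_iff_le_succ]
      intro i; fin_cases i <;> simp [hsv.le, hsvt]
  have hPA2 : ENNReal.ofReal ((t/a) * ((Real.sqrt (2*π*(t - t^2/a^2)))⁻¹
        * rexp (-(a + t/a)^2/(2*(t - t^2/a^2)))))
      * ENNReal.ofReal ((t/a) * ((Real.sqrt (2*π*(t^2/a^2)))⁻¹
        * rexp (-(3*(t/a))^2/(2*(t^2/a^2))))) ≤ P A2 := by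
    rw [hA2_def, hIF.measure_inter_preimage_eq_mul _ _ measurableSet_Icc measurableSet_Icc]
    exact mul_le_mul' hPX hPY
  -- disjointness
  have hdisj : Disjoint A1 A2 := by
    rw [Set.disjoint_left]
    intro ω h1 h2
    have hz1 : a ≤ Z ω := h1
    obtain ⟨hx, hy⟩ := h2
    have hx2 : X ω ≤ a + t/a := hx.2
    have hy2 : Y ω ≤ -(2*(t/a)) := hy.2
    have : Z ω = X ω + Y ω := by rw [hZ_def, hX_def, hY_def]; ring
    rw [this] at hz1
    clear_value X Y Z
    linarith
  -- subset
  have hsub : {ω | (⨆ s : Set.Icc (0:ℝ) t, Real.sqrt (2 * D) * B s.1 ω) < z₀}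
      ⊆ (A1 ∪ A2)ᶜ := by
    intro ω hω
    simp only [Set.mem_setOf_eq] at hω
    have hkey : ∀ r, 0 ≤ r → r ≤ t → B r ω < a := by
      intro r hr hrt
      have hcont : ContinuousOn (fun u => Real.sqrt (2*D) * B u ω) (Set.Icc 0 t) :=
        continuousOn_const.mul ((hCont ω).mono (fun x hx => hx.1))
      have hbdd : BddAbove (Set.range
          (fun p : Set.Icc (0:ℝ) t => Real.sqrt (2*D) * B p.1 ω)) := by
        have hcomp := (isCompact_Icc.image_of_continuousOn hcont).bddAbove
        have e : Set.range (fun p : Set.Icc (0:ℝ) t => Real.sqrt (2*D) * B p.1 ω)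
            = (fun u => Real.sqrt (2*D) * B u ω) '' Set.Icc 0 t := by
          ext y; constructor
          · rintro ⟨⟨x, hx⟩, rfl⟩; exact ⟨x, hx, rfl⟩
          · rintro ⟨x, hx, rfl⟩; exact ⟨⟨x, hx⟩, rfl⟩
        rwa [e]
      have hle := le_ciSup hbdd (⟨r, hr, hrt⟩ : Set.Icc (0:ℝ) t)
      have hlt : Real.sqrt (2*D) * B r ω < z₀ := lt_of_le_of_lt hle hω
      rw [← hza] at hlt
      exact lt_of_mul_lt_mul_left hlt hsqrt2D.le
    intro hmem
    rcases hmem with h1 | h2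
    · have : a ≤ Z ω := h1
      rw [hZ_def] at this
      simp only [hZero ω, sub_zero] at this
      exact absurd this (not_le.mpr (hkey t ht0.le le_rfl))
    · have : a ≤ X ω := h2.1.1
      rw [hX_def] at this
      simp only [hZero ω, sub_zero] at this
      exact absurd this (not_le.mpr (hkey _ hsv.le hsvt))
  -- the real-valued final inequality
  have hreal := crux a t ha ht0 ht1
  -- Q equals crux LHS
  have hsqrt2 : (0:ℝ) < Real.sqrt 2 := by positivity
  have hsqrtpi : (0:ℝ) < Real.sqrt π := by positivity
  have hsqrtD : (0:ℝ) < Real.sqrt D := Real.sqrt_pos.mpr hD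
  have h2Dsplit : Real.sqrt (2*D) = Real.sqrt 2 * Real.sqrt D := Real.sqrt_mul (by norm_num) D
  have h2pisplit : Real.sqrt (2*π) = Real.sqrt 2 * Real.sqrt π := Real.sqrt_mul (by norm_num) π
  have ha2 : a^2 = z₀^2/(2*D) := by
    rw [ha_def, div_pow, Real.sq_sqrt h2D.le]
  have hQeq : (Real.sqrt D / (Real.sqrt π * z₀)) * t ^ ((1:ℝ)/2)
        * Real.exp (-(z₀ ^ 2 / (4 * D)) / t)
      = 1/(Real.sqrt (2*π)) * (Real.sqrt t / a) * rexp (-a^2/(2*t)) := by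
    have hrpow : t ^ ((1:ℝ)/2) = Real.sqrt t := by
      rw [Real.sqrt_eq_rpow]
    rw [hrpow]
    have hexpeq : -(z₀ ^ 2 / (4 * D)) / t = -a^2/(2*t) := by
      rw [ha2]; field_simp; ring
    rw [hexpeq]
    rw [ha_def, h2pisplit, h2Dsplit]
    field_simp
  -- assemble in ENNReal
  set Q := (Real.sqrt D / (Real.sqrt π * z₀)) * t ^ ((1:ℝ)/2)
      * Real.exp (-(z₀ ^ 2 / (4 * D)) / t) with hQ_def
  have hQpos : 0 < Q := by
    rw [hQ_def]
    have : (0:ℝ) < t ^ ((1:ℝ)/2) := Real.rpow_pos_of_pos ht0 _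
    positivity
  have hQle : ENNReal.ofReal Q ≤ P A1 + P A2 := by
    have hL2nn : 0 ≤ (t/a) * ((Real.sqrt (2*π*(t - t^2/a^2)))⁻¹
        * rexp (-(a + t/a)^2/(2*(t - t^2/a^2)))) := by positivity
    have hL3nn : 0 ≤ (t/a) * ((Real.sqrt (2*π*(t^2/a^2)))⁻¹
        * rexp (-(3*(t/a))^2/(2*(t^2/a^2)))) := by positivity
    have hL1nn : 0 ≤ (Real.sqrt (2*π*t))⁻¹ * (rexp (-a^2/(2*t)) * (t/a - t^2/a^3)) := by
      have : t^2/a^3 ≤ t/a := by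
        rw [div_le_div_iff₀ (by positivity) (by positivity)]
        nlinarith [mul_le_mul_of_nonneg_left h2t (mul_nonneg ht0.le ha.le),
          mul_nonneg (mul_nonneg ht0.le ht0.le) ha.le]
      have h1 : (0:ℝ) ≤ (t/a - t^2/a^3) := by linarith
      positivity
    calc ENNReal.ofReal Q
        ≤ ENNReal.ofReal ((Real.sqrt (2*π*t))⁻¹ * (rexp (-a^2/(2*t)) * (t/a - t^2/a^3))
            + ((t/a) * ((Real.sqrt (2*π*(t - t^2/a^2)))⁻¹
              * rexp (-(a + t/a)^2/(2*(t - t^2/a^2)))))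
            * ((t/a) * ((Real.sqrt (2*π*(t^2/a^2)))⁻¹
              * rexp (-(3*(t/a))^2/(2*(t^2/a^2)))))) := by
          apply ENNReal.ofReal_le_ofReal
          rw [hQeq]
          exact hreal
      _ = ENNReal.ofReal ((Real.sqrt (2*π*t))⁻¹ * (rexp (-a^2/(2*t)) * (t/a - t^2/a^3)))
            + ENNReal.ofReal (((t/a) * ((Real.sqrt (2*π*(t - t^2/a^2)))⁻¹
              * rexp (-(a + t/a)^2/(2*(t - t^2/a^2)))))
            * ((t/a) * ((Real.sqrt (2*π*(t^2/a^2)))⁻¹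
              * rexp (-(3*(t/a))^2/(2*(t^2/a^2)))))) := by
          rw [ENNReal.ofReal_add hL1nn (mul_nonneg hL2nn hL3nn)]
      _ = ENNReal.ofReal ((Real.sqrt (2*π*t))⁻¹ * (rexp (-a^2/(2*t)) * (t/a - t^2/a^3)))
            + ENNReal.ofReal ((t/a) * ((Real.sqrt (2*π*(t - t^2/a^2)))⁻¹
              * rexp (-(a + t/a)^2/(2*(t - t^2/a^2)))))
            * ENNReal.ofReal ((t/a) * ((Real.sqrt (2*π*(t^2/a^2)))⁻¹
              * rexp (-(3*(t/a))^2/(2*(t^2/a^2))))) := by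
          rw [ENNReal.ofReal_mul hL2nn]
      _ ≤ P A1 + P A2 := add_le_add hPA1 hPA2
  -- finish
  have hunion : P (A1 ∪ A2) = P A1 + P A2 := measure_union hdisj hA2m
  have hstep : P {ω | (⨆ s : Set.Icc (0:ℝ) t, Real.sqrt (2 * D) * B s.1 ω) < z₀}
      ≤ P ((A1 ∪ A2)ᶜ) := measure_mono hsub
  have hcompl : P ((A1 ∪ A2)ᶜ) = 1 - P (A1 ∪ A2) := by
    rw [measure_compl (hA1m.union hA2m) (measure_ne_top P _), measure_univ]
  refine le_trans hstep ?_
  rw [hcompl, hunion]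
  calc (1:ENNReal) - (P A1 + P A2) ≤ 1 - ENNReal.ofReal Q := tsub_le_tsub_left hQle 1
    _ = ENNReal.ofReal (1 - Q) := by
        rw [ENNReal.ofReal_sub 1 hQpos.le, ENNReal.ofReal_one]

end SurvivalAux

set_option maxHeartbeats 1000000 in
/-- Lemma "bound z" of the paper: for a standard Brownian motion `B`, `z₀ > 0`, `D > 0`,
`C₃ = √D/(√π z₀)` and `C₄ = z₀²/(4D)`, there is `t₀ > 0` such that for `t ∈ (0, t₀)` the
probability that `sup_(s ∈ [0,t]) √(2D) B_s < z₀` is at most `1 - C₃ √t exp (-C₄/t)`. -/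
theorem survival_upper_bound {Ω : Type*} [MeasurableSpace Ω] (P : Measure Ω)
    [IsProbabilityMeasure P] (B : ℝ → Ω → ℝ) (hB : IsStdBM P B)
    (z₀ D : ℝ) (hz : 0 < z₀) (hD : 0 < D) :
    ∃ t₀ > (0:ℝ), ∀ t ∈ Set.Ioo (0:ℝ) t₀,
      P {ω | (⨆ s : Set.Icc (0:ℝ) t, Real.sqrt (2 * D) * B s.1 ω) < z₀}
        ≤ ENNReal.ofReal (1 - (Real.sqrt D / (Real.sqrt π * z₀)) * t ^ ((1:ℝ)/2)
            * Real.exp (-(z₀ ^ 2 / (4 * D)) / t)) := by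
  obtain ⟨hMeas, hZero, hCont, hLaw, hIndep⟩ := hB
  exact survival_upper_bound' P B hMeas hZero hCont hLaw hIndep z₀ D hz hD
end

section
/- For every c > 0 there exists t₀ > 0 such that for all t ∈ (0, t₀): ∑_{n=0}^{∞} exp(−c·(n + 1/2)²/t) ≤ 2 · exp(−c/(4t)). -/
open Real Filter

/-- For every `c > 0` there exists `t₀ > 0` such that for all `t ∈ (0, t₀)`,
`∑_(n=0)^∞ exp (-c (n + 1/2)² / t) ≤ 2 exp (-c/(4t))`. -/
theorem theta_series_bound (c : ℝ) (hc : 0 < c) :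
    ∃ t₀ > (0:ℝ), ∀ t ∈ Set.Ioo (0:ℝ) t₀,
      (∑' n : ℕ, Real.exp (-c * ((n : ℝ) + 1/2) ^ 2 / t)) ≤ 2 * Real.exp (-c / (4 * t)) := by
  have hlog2 : (0:ℝ) < Real.log 2 := Real.log_pos (by norm_num)
  refine ⟨c / Real.log 2, by positivity, ?_⟩
  rintro t ⟨ht0, htc⟩
  set r : ℝ := Real.exp (-(c / t)) with hr_def
  have hr0 : 0 ≤ r := (Real.exp_pos _).le
  have hct : Real.log 2 ≤ c / t := by
    rw [le_div_iff₀ ht0]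
    nlinarith [(lt_div_iff₀ hlog2).mp htc]
  have hr_half : r ≤ 1 / 2 := by
    have : r ≤ Real.exp (-(Real.log 2)) := Real.exp_le_exp.mpr (by linarith)
    calc r ≤ Real.exp (-(Real.log 2)) := this
      _ = 1 / 2 := by
        rw [Real.exp_neg, Real.exp_log (by norm_num : (0:ℝ) < 2)]; norm_num
  have hr1 : r < 1 := lt_of_le_of_lt hr_half (by norm_num)
  have key : ∀ n : ℕ, Real.exp (-c * ((n : ℝ) + 1/2) ^ 2 / t)
      ≤ Real.exp (-c / (4 * t)) * r ^ n := by
    intro n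
    rw [hr_def, ← Real.exp_nat_mul, ← Real.exp_add]
    apply Real.exp_le_exp.mpr
    have h1 : -c * ((n : ℝ) + 1/2) ^ 2 / t
        = -c / (4 * t) + (n : ℝ) * -(c / t) + -(c * (n : ℝ) ^ 2 / t) := by
      field_simp; ring
    have h2 : 0 ≤ c * (n : ℝ) ^ 2 / t := by positivity
    linarith
  have hgeo : Summable (fun n : ℕ => Real.exp (-c / (4 * t)) * r ^ n) :=
    (summable_geometric_of_lt_one hr0 hr1).mul_left _
  have hsum : Summable (fun n : ℕ => Real.exp (-c * ((n : ℝ) + 1/2) ^ 2 / t)) :=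
    Summable.of_nonneg_of_le (fun n => (Real.exp_pos _).le) key hgeo
  calc (∑' n : ℕ, Real.exp (-c * ((n : ℝ) + 1/2) ^ 2 / t))
      ≤ ∑' n : ℕ, Real.exp (-c / (4 * t)) * r ^ n := Summable.tsum_le_tsum key hsum hgeo
    _ = Real.exp (-c / (4 * t)) * (1 - r)⁻¹ := by
        rw [tsum_mul_left, tsum_geometric_of_lt_one hr0 hr1]
    _ ≤ 2 * Real.exp (-c / (4 * t)) := by
        rw [mul_comm]
        apply mul_le_mul_of_nonneg_right _ (Real.exp_pos _).le
        rw [inv_le_comm₀ (by linarith) (by norm_num)]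
        linarith
end

section
/- For any constants C₁, C₂, C₃, C₄ > 0 and any p ≥ 0: lim_{N→∞} (log N)^p · [ C₁ · (log N)^{1/4} · e^{−C₂·√(log N)} + N · ( 1 − C₃ · (log N)^{−1/4} · e^{−C₄·√(log N)} )^{N−1} ] = 0. -/
open Real Filter

private lemma aux_sqrt_atTop : Tendsto Real.sqrt atTop atTop := by
  have h := tendsto_rpow_atTop (y := (1/2 : ℝ)) (by norm_num)
  refine h.congr' ?_
  filter_upwards [eventually_ge_atTop (0:ℝ)] with x hx
  rw [Real.sqrt_eq_rpow]

private lemma aux_decay (s c : ℝ) (hc : 0 < c) :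
    Tendsto (fun x : ℝ => x ^ s * Real.exp (-c * Real.sqrt x)) atTop (nhds 0) := by
  have h := (tendsto_rpow_mul_exp_neg_mul_atTop_nhds_zero (2 * s) c hc).comp aux_sqrt_atTop
  refine h.congr' ?_
  filter_upwards [eventually_ge_atTop (0:ℝ)] with x hx
  simp only [Function.comp]
  rw [Real.sqrt_eq_rpow, ← Real.rpow_mul hx, show (1/2 : ℝ) * (2 * s) = s by ring]

/-- The key asymptotic estimate in the proof of Theorem 1 of the paper: for any
`C₁, C₂, C₃, C₄ > 0` and `p ≥ 0`,
`(log N)^p [C₁ (log N)^(1/4) e^(-C₂ √(log N)) + N (1 - C₃ (log N)^(-1/4) e^(-C₄ √(log N)))^(N-1)] → 0`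
as `N → ∞`. -/
theorem key_estimate (C₁ C₂ C₃ C₄ : ℝ) (h1 : 0 < C₁) (h2 : 0 < C₂) (h3 : 0 < C₃)
    (h4 : 0 < C₄) (p : ℝ) (hp : 0 ≤ p) :
    Tendsto (fun N : ℕ =>
      (Real.log N) ^ p *
        (C₁ * (Real.log N) ^ ((1:ℝ)/4) * Real.exp (-C₂ * Real.sqrt (Real.log N))
          + (N : ℝ) * (1 - C₃ * (Real.log N) ^ (-(1:ℝ)/4)
              * Real.exp (-C₄ * Real.sqrt (Real.log N))) ^ (N - 1)))
      atTop (nhds 0) := by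
  have hNcast : Tendsto (fun N : ℕ => (N : ℝ)) atTop atTop := tendsto_natCast_atTop_atTop
  have hlog : Tendsto (fun N : ℕ => Real.log N) atTop atTop :=
    Real.tendsto_log_atTop.comp hNcast
  set ε : ℕ → ℝ := fun N =>
    C₃ * (Real.log N) ^ (-(1:ℝ)/4) * Real.exp (-C₄ * Real.sqrt (Real.log N)) with hε
  -- Part A
  have hA : Tendsto (fun N : ℕ => (Real.log N) ^ p *
      (C₁ * (Real.log N) ^ ((1:ℝ)/4) * Real.exp (-C₂ * Real.sqrt (Real.log N))))
      atTop (nhds 0) := by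
    have h0 := (((aux_decay (p + 1/4) C₂ h2).comp hlog).const_mul C₁)
    rw [mul_zero] at h0
    refine h0.congr' ?_
    filter_upwards [hlog.eventually (eventually_ge_atTop (0:ℝ))] with N hN
    simp only [Function.comp]
    rw [Real.rpow_add' hN (by positivity)]
    ring
  -- ε tends to zero
  have hεt : Tendsto ε atTop (nhds 0) := by
    have h0 := (((aux_decay (-(1:ℝ)/4) C₄ h4).comp hlog).const_mul C₃)
    rw [mul_zero] at h0
    refine h0.congr fun N => by simp [hε, Function.comp, mul_assoc]
  -- eventual lower bound for ε
  have hεlb : ∀ᶠ N : ℕ in atTop,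
      Real.exp (-(1 + C₄) * Real.sqrt (Real.log N)) ≤ ε N := by
    have h14 : Tendsto (fun N : ℕ =>
        (Real.log N) ^ ((1:ℝ)/4) * Real.exp (-1 * Real.sqrt (Real.log N)))
        atTop (nhds 0) := (aux_decay (1/4) 1 one_pos).comp hlog
    filter_upwards [h14.eventually (eventually_le_nhds h3),
        hlog.eventually (eventually_ge_atTop (1:ℝ))] with N hle hL1
    have hL0 : (0:ℝ) < Real.log N := lt_of_lt_of_le one_pos hL1
    have hpow : Real.exp (-1 * Real.sqrt (Real.log N)) ≤ C₃ * (Real.log N) ^ (-(1:ℝ)/4) := by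
      have hkey : Real.exp (-1 * Real.sqrt (Real.log N)) * (Real.log N) ^ ((1:ℝ)/4) ≤ C₃ := by
        rw [mul_comm]; exact hle
      have heq : Real.exp (-1 * Real.sqrt (Real.log N)) =
          (Real.exp (-1 * Real.sqrt (Real.log N)) * (Real.log N) ^ ((1:ℝ)/4)) *
            (Real.log N) ^ (-(1:ℝ)/4) := by
        rw [mul_assoc, ← Real.rpow_add hL0, show (1:ℝ)/4 + -(1:ℝ)/4 = 0 by ring,
          Real.rpow_zero, mul_one]
      rw [heq]
      exact mul_le_mul_of_nonneg_right hkey (Real.rpow_nonneg hL0.le _)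
    calc Real.exp (-(1 + C₄) * Real.sqrt (Real.log N))
        = Real.exp (-1 * Real.sqrt (Real.log N)) * Real.exp (-C₄ * Real.sqrt (Real.log N)) := by
          rw [← Real.exp_add]; ring_nf
      _ ≤ C₃ * (Real.log N) ^ (-(1:ℝ)/4) * Real.exp (-C₄ * Real.sqrt (Real.log N)) :=
          mul_le_mul_of_nonneg_right hpow (Real.exp_nonneg _)
  -- Part B via squeeze
  have hg : Tendsto (fun N : ℕ => (N : ℝ) ^ (p + 1) * Real.exp (-(1/2) * Real.sqrt N))
      atTop (nhds 0) := (aux_decay (p + 1) (1/2) (by norm_num)).comp hNcast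
  have hB : Tendsto (fun N : ℕ => (Real.log N) ^ p *
      ((N : ℝ) * (1 - ε N) ^ (N - 1))) atTop (nhds 0) := by
    apply squeeze_zero' ?_ ?_ hg
    · filter_upwards [hεt.eventually (eventually_le_nhds one_pos),
        hlog.eventually (eventually_ge_atTop (0:ℝ))] with N hε1 hL0
      have : 0 ≤ 1 - ε N := by linarith
      positivity
    · filter_upwards [hεt.eventually (eventually_le_nhds one_pos), hεlb,
        hlog.eventually (eventually_ge_atTop (max 1 (2 * (1 + C₄)) ^ 2)),
        eventually_ge_atTop 2] with N hε1 hεlbN hLbig hN2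
      have hN0 : (0:ℝ) < N := by exact_mod_cast Nat.lt_of_lt_of_le two_pos hN2
      have hN2' : (2:ℝ) ≤ N := by exact_mod_cast hN2
      set L := Real.log N with hLdef
      have hm0 : (0:ℝ) ≤ max 1 (2 * (1 + C₄)) := le_trans zero_le_one (le_max_left _ _)
      have hL1 : (1:ℝ) ≤ L := by nlinarith [le_max_left (1:ℝ) (2 * (1 + C₄))]
      have hL0 : (0:ℝ) < L := lt_of_lt_of_le one_pos hL1
      have hsL : 2 * (1 + C₄) ≤ Real.sqrt L := by
        have h := Real.sqrt_le_sqrt hLbig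
        rw [Real.sqrt_sq hm0] at h
        exact le_trans (le_max_right _ _) h
      have hε0 : 0 ≤ ε N := le_trans (Real.exp_nonneg _) hεlbN
      have hexpL : Real.exp L = (N:ℝ) := Real.exp_log hN0
      have hsqrtN : Real.sqrt N = Real.exp (L / 2) := by
        rw [show (N:ℝ) = Real.exp (L/2) * Real.exp (L/2) by
          rw [← Real.exp_add, ← hexpL]; congr 1; ring]
        exact Real.sqrt_mul_self (Real.exp_nonneg _)
      have hNm1 : ((N - 1 : ℕ) : ℝ) = (N:ℝ) - 1 := by
        rw [Nat.cast_sub (le_trans one_le_two hN2), Nat.cast_one]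
      have hkey : Real.sqrt N / 2 ≤ ((N - 1 : ℕ) : ℝ) * ε N := by
        have hstep1 : ((N:ℝ) / 2) * Real.exp (-(1 + C₄) * Real.sqrt L) ≤
            ((N - 1 : ℕ) : ℝ) * ε N := by
          apply mul_le_mul ?_ hεlbN (Real.exp_nonneg _) (by positivity)
          rw [hNm1]; linarith
        refine le_trans ?_ hstep1
        rw [hsqrtN]
        have heq : (N:ℝ)/2 * Real.exp (-(1 + C₄) * Real.sqrt L)
            = Real.exp (L - (1 + C₄) * Real.sqrt L) / 2 := by
          rw [← hexpL, Real.exp_sub, neg_mul, Real.exp_neg]; ring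
        rw [heq]
        gcongr
        nlinarith [Real.mul_self_sqrt hL0.le, Real.sqrt_nonneg L]
      have h01 : (0:ℝ) ≤ 1 - ε N := by linarith
      calc L ^ p * ((N : ℝ) * (1 - ε N) ^ (N - 1))
          ≤ (N:ℝ) ^ p * ((N : ℝ) * (1 - ε N) ^ (N - 1)) := by
            apply mul_le_mul_of_nonneg_right
              (Real.rpow_le_rpow hL0.le (Real.log_le_self hN0.le) hp)
            positivity
        _ ≤ (N:ℝ) ^ p * ((N : ℝ) * Real.exp (-(((N-1:ℕ):ℝ) * ε N))) := by
            apply mul_le_mul_of_nonneg_left ?_ (Real.rpow_nonneg hN0.le p)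
            apply mul_le_mul_of_nonneg_left ?_ hN0.le
            calc (1 - ε N) ^ (N - 1) ≤ Real.exp (-ε N) ^ (N - 1) := by
                  apply pow_le_pow_left₀ h01
                  linarith [Real.add_one_le_exp (-ε N)]
              _ = Real.exp (-(((N-1:ℕ):ℝ) * ε N)) := by
                  rw [← Real.exp_nat_mul]; congr 1; ring
        _ ≤ (N:ℝ) ^ p * ((N : ℝ) * Real.exp (-(1/2) * Real.sqrt N)) := by
            apply mul_le_mul_of_nonneg_left ?_ (Real.rpow_nonneg hN0.le p)
            apply mul_le_mul_of_nonneg_left ?_ hN0.le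
            apply Real.exp_le_exp.mpr
            nlinarith [hkey]
        _ = (N : ℝ) ^ (p + 1) * Real.exp (-(1/2) * Real.sqrt N) := by
            rw [Real.rpow_add_one (ne_of_gt hN0)]; ring
  have h := hA.add hB
  rw [add_zero] at h
  refine h.congr fun N => ?_
  simp only [hε]
  ring
end

section
/- Let C₁, C₂, C₃, C₄ > 0 and t₀ > 0 be constants, and let S₀ : (0,∞) → [0,1] be a function satisfying S₀(t) ≤ 1 − C₃·t^{1/2}·e^{−C₄/t} for all t ∈ (0, t₀). For each N ≥ 1, let τ_{N,1}, …, τ_{N,N} be i.i.d. nonnegative random variables on a probability space with common survival function P(τ_{N,1} > t) = S₀(t), let T_N = min{τ_{N,1}, …, τ_{N,N}}, and let σ_N be any nonnegative random variable on the same probability space satisfying P(σ_N ≤ t) ≤ C₁·t^{−1/2}·e^{−C₂/t} for all t ∈ (0, t₀). Then for every p ≥ 0: lim_{N→∞} (log N)^p · P( σ_N ≤ T_N ) = 0. -/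
open MeasureTheory ProbabilityTheory Real Filter

private lemma aux_tendsto_zero (c b q : ℝ) (hb : 0 < b) :
    Tendsto (fun x : ℝ => c * x ^ q * Real.exp (-(b * x ^ ((1:ℝ)/2)))) atTop (nhds 0) := by
  have h0 : Tendsto (fun y : ℝ => c * (y ^ (2*q) * Real.exp (-b * y))) atTop (nhds 0) := by
    have := (tendsto_rpow_mul_exp_neg_mul_atTop_nhds_zero (2*q) b hb).const_mul c
    simpa using this
  have hcomp := h0.comp (tendsto_rpow_atTop (by norm_num : (0:ℝ) < 1/2))
  refine Tendsto.congr' ?_ hcomp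
  filter_upwards [eventually_ge_atTop (0:ℝ)] with x hx
  have h1 : (x ^ ((1:ℝ)/2)) ^ (2*q) = x ^ q := by
    rw [← Real.rpow_mul hx]
    congr 1
    ring
  simp only [Function.comp_apply, h1, neg_mul]
  ring

private lemma comp_mez (l : ℝ) (hl : 1 ≤ l) :
    ((l ^ ((1:ℝ)/2))⁻¹) ^ (-(1:ℝ)/2) = l ^ ((1:ℝ)/4) := by
  have hl0 : (0:ℝ) < l := by linarith
  have hs0 : (0:ℝ) < l ^ ((1:ℝ)/2) := Real.rpow_pos_of_pos hl0 _
  have hh : (-(1:ℝ)/2) = -((1:ℝ)/2) := by norm_num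
  rw [hh, Real.rpow_neg (inv_nonneg.mpr hs0.le), Real.inv_rpow hs0.le, inv_inv,
    ← Real.rpow_mul hl0.le]
  norm_num

private lemma comp_mez' (l : ℝ) (hl : 1 ≤ l) :
    ((l ^ ((1:ℝ)/2))⁻¹) ^ ((1:ℝ)/2) = (l ^ ((1:ℝ)/4))⁻¹ := by
  have hl0 : (0:ℝ) < l := by linarith
  have hs0 : (0:ℝ) < l ^ ((1:ℝ)/2) := Real.rpow_pos_of_pos hl0 _
  rw [Real.inv_rpow hs0.le, ← Real.rpow_mul hl0.le]
  norm_num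

private lemma comp_div (c x : ℝ) : -c / x⁻¹ = -(c * x) := by
  field_simp

/-- The abstract mechanism behind Theorem 1 of the paper: if `T_N` is the minimum of `N`
i.i.d. nonnegative random variables whose common survival function `S₀` satisfies
`S₀(t) ≤ 1 - C₃ √t e^(-C₄/t)` for small `t`, and `σ_N` are nonnegative random variables
with `P(σ_N ≤ t) ≤ C₁ t^(-1/2) e^(-C₂/t)` for small `t`, then
`(log N)^p P(σ_N ≤ T_N) → 0` as `N → ∞` for every `p ≥ 0`. -/
theorem deviation_probability_decay (C₁ C₂ C₃ C₄ t₀ : ℝ)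
    (h1 : 0 < C₁) (h2 : 0 < C₂) (h3 : 0 < C₃) (h4 : 0 < C₄) (ht₀ : 0 < t₀)
    (S₀ : ℝ → ℝ) (hS₀mem : ∀ t > (0:ℝ), S₀ t ∈ Set.Icc (0:ℝ) 1)
    (hS₀ : ∀ t ∈ Set.Ioo (0:ℝ) t₀, S₀ t ≤ 1 - C₃ * t ^ ((1:ℝ)/2) * Real.exp (-C₄ / t))
    (Ω : ℕ → Type*) [∀ N, MeasurableSpace (Ω N)]
    (P : ∀ N, Measure (Ω N)) [∀ N, IsProbabilityMeasure (P N)]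
    (τ : ∀ N, Fin N → Ω N → ℝ)
    (hτmeas : ∀ N i, Measurable (τ N i))
    (hτnonneg : ∀ N i ω, 0 ≤ τ N i ω)
    (hτindep : ∀ N, iIndepFun (τ N) (P N))
    (hτsurv : ∀ N (i : Fin N), ∀ t > (0:ℝ),
      P N {ω | t < τ N i ω} = ENNReal.ofReal (S₀ t))
    (σ : ∀ N, Ω N → ℝ)
    (hσmeas : ∀ N, Measurable (σ N))
    (hσnonneg : ∀ N ω, 0 ≤ σ N ω)
    (hσ : ∀ N, ∀ t ∈ Set.Ioo (0:ℝ) t₀,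
      P N {ω | σ N ω ≤ t} ≤ ENNReal.ofReal (C₁ * t ^ (-(1:ℝ)/2) * Real.exp (-C₂ / t)))
    (p : ℝ) (hp : 0 ≤ p) :
    Tendsto (fun N : ℕ =>
        (Real.log N) ^ p * (P N {ω | σ N ω ≤ ⨅ i, τ N i ω}).toReal)
      atTop (nhds 0) := by
  -- notation
  set L : ℕ → ℝ := fun N => Real.log N with hLdef
  set s : ℕ → ℝ := fun N => (L N) ^ ((1:ℝ)/2) with hsdef
  set δ : ℕ → ℝ := fun N => (s N)⁻¹ with hδdef
  set a : ℕ → ℝ := fun N => C₃ * (δ N) ^ ((1:ℝ)/2) * Real.exp (-C₄ / δ N) with hadef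
  set A : ℕ → ℝ := fun N => C₁ * (δ N) ^ (-(1:ℝ)/2) * Real.exp (-C₂ / δ N) with hAdef
  have hL : Tendsto L atTop atTop := Real.tendsto_log_atTop.comp tendsto_natCast_atTop_atTop
  have hs : Tendsto s atTop atTop :=
    (tendsto_rpow_atTop (by norm_num : (0:ℝ) < 1/2)).comp hL
  have hBlow : Tendsto (fun N : ℕ => C₃/8 * Real.exp (L N / 8)) atTop atTop :=
    Tendsto.const_mul_atTop (by positivity)
      (Real.tendsto_exp_atTop.comp (hL.atTop_div_const (by norm_num)))
  -- the eventual conditions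
  have hev : ∀ᶠ N : ℕ in atTop, 1 ≤ N ∧ 1 ≤ L N ∧ 4*C₄ ≤ s N ∧ t₀⁻¹ + 1 ≤ s N ∧
      1 ≤ C₃/8 * Real.exp (L N / 8) := by
    filter_upwards [eventually_ge_atTop 1, hL.eventually_ge_atTop 1,
      hs.eventually_ge_atTop (4*C₄), hs.eventually_ge_atTop (t₀⁻¹+1),
      hBlow.eventually_ge_atTop 1] with N e1 e2 e3 e4 e5
    exact ⟨e1, e2, e3, e4, e5⟩
  -- per-N facts under the eventual conditions
  have key : ∀ N : ℕ, 1 ≤ N → 1 ≤ L N → 4*C₄ ≤ s N → t₀⁻¹ + 1 ≤ s N →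
      1 ≤ C₃/8 * Real.exp (L N / 8) →
      δ N ∈ Set.Ioo 0 t₀ ∧ (N:ℝ) ^ ((1:ℝ)/2) ≤ (N:ℝ) * a N := by
    intro N hN1 hl1 hc4 ht0s hB1
    have hl0 : (0:ℝ) < L N := by linarith
    have hs0 : (0:ℝ) < s N := Real.rpow_pos_of_pos hl0 _
    have hNpos : (0:ℝ) < (N:ℝ) := by exact_mod_cast hN1
    have hδpos : 0 < δ N := inv_pos.mpr hs0
    have hδlt : δ N < t₀ := by
      have h5 : t₀⁻¹ < s N := lt_of_lt_of_le (lt_add_one _) ht0s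
      have := inv_strictAnti₀ (inv_pos.mpr ht₀) h5
      rwa [inv_inv] at this
    refine ⟨⟨hδpos, hδlt⟩, ?_⟩
    -- lower bound for N^(1/2) * a N
    have hss : s N * s N = L N := by
      rw [hsdef]
      simp only
      rw [← Real.rpow_add hl0]
      norm_num
    have bound1 : C₄ * s N ≤ L N / 4 := by nlinarith
    have e1 : Real.exp (-(C₄ * s N)) ≥ Real.exp (-(L N / 4)) :=
      Real.exp_le_exp.mpr (neg_le_neg bound1)
    have hq0 : (0:ℝ) < (L N) ^ ((1:ℝ)/4) := Real.rpow_pos_of_pos hl0 _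
    have hll : (L N) ^ ((1:ℝ)/4) ≤ L N := by
      have := Real.rpow_le_rpow_of_exponent_le hl1 (by norm_num : (1:ℝ)/4 ≤ 1)
      rwa [Real.rpow_one] at this
    have hle8 : L N ≤ 8 * Real.exp (L N / 8) := by
      have := Real.add_one_le_exp (L N / 8)
      nlinarith [Real.exp_pos (L N / 8)]
    have e2 : 8⁻¹ * Real.exp (-(L N / 8)) ≤ ((L N) ^ ((1:ℝ)/4))⁻¹ := by
      have h8 : (L N) ^ ((1:ℝ)/4) ≤ 8 * Real.exp (L N / 8) := le_trans hll hle8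
      have := inv_anti₀ hq0 h8
      rwa [mul_inv, ← Real.exp_neg] at this
    -- rewrite a N
    have haN : a N = C₃ * ((L N) ^ ((1:ℝ)/4))⁻¹ * Real.exp (-(C₄ * s N)) := by
      rw [hadef]
      simp only
      rw [hδdef]
      simp only
      rw [hsdef]
      simp only
      rw [comp_mez' (L N) hl1, comp_div]
    have hNr : (N:ℝ) ^ ((1:ℝ)/2) = Real.exp (L N / 2) := by
      rw [Real.rpow_def_of_pos hNpos, hLdef]
      simp only
      congr 1
      ring
    have hstep : C₃/8 * Real.exp (L N / 8) ≤ (N:ℝ) ^ ((1:ℝ)/2) * a N := by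
      have hmul : C₃ * (8⁻¹ * Real.exp (-(L N / 8))) * Real.exp (-(L N / 4)) ≤
          C₃ * ((L N) ^ ((1:ℝ)/4))⁻¹ * Real.exp (-(C₄ * s N)) := by
        apply mul_le_mul
        · exact mul_le_mul_of_nonneg_left e2 h3.le
        · exact e1
        · positivity
        · positivity
      have heq : Real.exp (L N / 2) * (C₃ * (8⁻¹ * Real.exp (-(L N / 8))) * Real.exp (-(L N / 4)))
          = C₃/8 * Real.exp (L N / 8) := by
        have hx : Real.exp (L N / 2) * Real.exp (-(L N / 8)) * Real.exp (-(L N / 4))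
            = Real.exp (L N / 8) := by
          rw [← Real.exp_add, ← Real.exp_add]
          congr 1
          ring
        calc Real.exp (L N / 2) * (C₃ * (8⁻¹ * Real.exp (-(L N / 8))) * Real.exp (-(L N / 4)))
            = C₃ * 8⁻¹ * (Real.exp (L N / 2) * Real.exp (-(L N / 8)) * Real.exp (-(L N / 4))) := by
              ring
          _ = C₃/8 * Real.exp (L N / 8) := by rw [hx]; ring
      rw [hNr, haN, ← heq]
      exact mul_le_mul_of_nonneg_left hmul (Real.exp_pos _).le
    have hq1 : 1 ≤ (N:ℝ) ^ ((1:ℝ)/2) * a N := le_trans hB1 hstep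
    have hNsq : (N:ℝ) ^ ((1:ℝ)/2) * (N:ℝ) ^ ((1:ℝ)/2) = (N:ℝ) := by
      rw [← Real.rpow_add hNpos]
      norm_num
    have hqn : (0:ℝ) ≤ (N:ℝ) ^ ((1:ℝ)/2) := Real.rpow_nonneg hNpos.le _
    calc (N:ℝ) ^ ((1:ℝ)/2) = (N:ℝ) ^ ((1:ℝ)/2) * 1 := by ring
      _ ≤ (N:ℝ) ^ ((1:ℝ)/2) * ((N:ℝ) ^ ((1:ℝ)/2) * a N) := by
          exact mul_le_mul_of_nonneg_left hq1 hqn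
      _ = ((N:ℝ) ^ ((1:ℝ)/2) * (N:ℝ) ^ ((1:ℝ)/2)) * a N := by ring
      _ = (N:ℝ) * a N := by rw [hNsq]
  -- measure bound
  have hmeasBound : ∀ N : ℕ, 1 ≤ N → δ N ∈ Set.Ioo 0 t₀ →
      (P N {ω | σ N ω ≤ ⨅ i, τ N i ω}).toReal ≤ A N + Real.exp (-((N:ℝ) * a N)) := by
    intro N hN1 hδI
    have hAnn : 0 ≤ A N := by
      rw [hAdef]; simp only; positivity
    have hsub : {ω | σ N ω ≤ ⨅ i, τ N i ω} ⊆
        {ω | σ N ω ≤ δ N} ∪ ⋂ i, {ω | δ N < τ N i ω} := by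
      intro ω hω
      by_cases hcase : σ N ω ≤ δ N
      · exact Or.inl hcase
      · refine Or.inr (Set.mem_iInter.mpr fun i => ?_)
        push_neg at hcase
        have hinf : (⨅ i, τ N i ω) ≤ τ N i ω :=
          ciInf_le (Set.Finite.bddBelow (Set.finite_range _)) i
        exact lt_of_lt_of_le (lt_of_lt_of_le hcase hω) hinf
    have hprod : P N (⋂ i, {ω | δ N < τ N i ω}) = ENNReal.ofReal (S₀ (δ N)) ^ N := by
      rw [(hτindep N).meas_iInter (s := fun i => {ω | δ N < τ N i ω})
        (fun i => ⟨Set.Ioi (δ N), measurableSet_Ioi, rfl⟩)]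
      have hsv : ∀ i : Fin N, P N {ω | δ N < τ N i ω} = ENNReal.ofReal (S₀ (δ N)) :=
        fun i => hτsurv N i (δ N) hδI.1
      simp [hsv, Finset.prod_const, Finset.card_univ]
    have hexp : ENNReal.ofReal (S₀ (δ N)) ^ N ≤ ENNReal.ofReal (Real.exp (-((N:ℝ) * a N))) := by
      have h1a : S₀ (δ N) ≤ Real.exp (-(a N)) := by
        have hSb := hS₀ (δ N) hδI
        have h2a := Real.add_one_le_exp (-(a N))
        rw [hadef]
        simp only
        rw [hadef] at h2a
        simp only at h2a
        linarith
      calc ENNReal.ofReal (S₀ (δ N)) ^ N ≤ ENNReal.ofReal (Real.exp (-(a N))) ^ N :=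
            pow_le_pow_left₀ zero_le (ENNReal.ofReal_le_ofReal h1a) N
        _ = ENNReal.ofReal (Real.exp (-(a N)) ^ N) :=
            (ENNReal.ofReal_pow (Real.exp_nonneg _) N).symm
        _ = ENNReal.ofReal (Real.exp (-((N:ℝ) * a N))) := by
            rw [← Real.exp_nat_mul]
            congr 1
            ring
    have hchain : P N {ω | σ N ω ≤ ⨅ i, τ N i ω} ≤
        ENNReal.ofReal (A N) + ENNReal.ofReal (Real.exp (-((N:ℝ) * a N))) := by
      refine le_trans (measure_mono hsub) (le_trans (measure_union_le _ _) ?_)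
      refine add_le_add ?_ ?_
      · exact hσ N (δ N) hδI
      · rw [hprod]
        exact hexp
    have hne : ENNReal.ofReal (A N) + ENNReal.ofReal (Real.exp (-((N:ℝ) * a N))) ≠ ⊤ :=
      ENNReal.add_ne_top.mpr ⟨ENNReal.ofReal_ne_top, ENNReal.ofReal_ne_top⟩
    have := ENNReal.toReal_mono hne hchain
    rwa [ENNReal.toReal_add ENNReal.ofReal_ne_top ENNReal.ofReal_ne_top,
      ENNReal.toReal_ofReal hAnn, ENNReal.toReal_ofReal (Real.exp_nonneg _)] at this
  -- first limit
  have TA : Tendsto (fun N : ℕ => (L N) ^ p * A N) atTop (nhds 0) := by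
    refine Tendsto.congr' ?_ ((aux_tendsto_zero C₁ C₂ (p + 1/4) h2).comp hL)
    filter_upwards [hL.eventually_ge_atTop 1] with N hl1
    have hl0 : (0:ℝ) < L N := by linarith
    have hAeq : A N = C₁ * (L N) ^ ((1:ℝ)/4) * Real.exp (-(C₂ * s N)) := by
      rw [hAdef]
      simp only
      rw [hδdef]
      simp only
      rw [hsdef]
      simp only
      rw [comp_mez (L N) hl1, comp_div]
    simp only [Function.comp_apply, hAeq]
    rw [Real.rpow_add hl0]
    rw [hsdef]
    ring_nf
  -- second limit
  have TB : Tendsto (fun N : ℕ => (L N) ^ p * Real.exp (-((N:ℝ) ^ ((1:ℝ)/2)))) atTop (nhds 0) := by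
    have houter : Tendsto (fun y : ℝ => (2:ℝ)^p * (y ^ p * Real.exp (-1 * y))) atTop (nhds 0) := by
      have := (tendsto_rpow_mul_exp_neg_mul_atTop_nhds_zero p 1 one_pos).const_mul ((2:ℝ)^p)
      simpa using this
    have hinner : Tendsto (fun N : ℕ => (N:ℝ) ^ ((1:ℝ)/2)) atTop atTop :=
      (tendsto_rpow_atTop (by norm_num : (0:ℝ) < 1/2)).comp tendsto_natCast_atTop_atTop
    refine squeeze_zero' ?_ ?_ (houter.comp hinner)
    · filter_upwards [eventually_ge_atTop 1] with N hN1
      have : (0:ℝ) ≤ L N := Real.log_nonneg (by exact_mod_cast hN1)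
      positivity
    · filter_upwards [eventually_ge_atTop 1] with N hN1
      have hNpos : (0:ℝ) < (N:ℝ) := by exact_mod_cast hN1
      have hlog0 : (0:ℝ) ≤ L N := Real.log_nonneg (by exact_mod_cast hN1)
      have hq0 : (0:ℝ) < (N:ℝ) ^ ((1:ℝ)/2) := Real.rpow_pos_of_pos hNpos _
      have hlog : L N ≤ 2 * (N:ℝ) ^ ((1:ℝ)/2) := by
        have h5 := Real.log_le_sub_one_of_pos hq0
        have hh : Real.log ((N:ℝ) ^ ((1:ℝ)/2)) = (1/2) * L N := by
          rw [Real.log_rpow hNpos, hLdef]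
        rw [hh] at h5
        linarith
      have hLp : (L N) ^ p ≤ (2:ℝ)^p * ((N:ℝ) ^ ((1:ℝ)/2)) ^ p := by
        have := Real.rpow_le_rpow hlog0 hlog hp
        rwa [Real.mul_rpow (by norm_num : (0:ℝ) ≤ 2) hq0.le] at this
      have : (L N) ^ p * Real.exp (-((N:ℝ) ^ ((1:ℝ)/2))) ≤
          (2:ℝ)^p * (((N:ℝ) ^ ((1:ℝ)/2)) ^ p * Real.exp (-1 * (N:ℝ) ^ ((1:ℝ)/2))) := by
        have h6 := mul_le_mul_of_nonneg_right hLp (Real.exp_nonneg (-((N:ℝ) ^ ((1:ℝ)/2))))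
        calc (L N) ^ p * Real.exp (-((N:ℝ) ^ ((1:ℝ)/2)))
            ≤ (2:ℝ)^p * ((N:ℝ) ^ ((1:ℝ)/2)) ^ p * Real.exp (-((N:ℝ) ^ ((1:ℝ)/2))) := h6
          _ = (2:ℝ)^p * (((N:ℝ) ^ ((1:ℝ)/2)) ^ p * Real.exp (-1 * (N:ℝ) ^ ((1:ℝ)/2))) := by
              rw [neg_one_mul]; ring
      exact this
  -- assemble
  have hsum : Tendsto (fun N : ℕ => (L N) ^ p * A N +
      (L N) ^ p * Real.exp (-((N:ℝ) ^ ((1:ℝ)/2)))) atTop (nhds 0) := by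
    simpa using TA.add TB
  refine squeeze_zero' ?_ ?_ hsum
  · filter_upwards [hL.eventually_ge_atTop 1] with N hl1
    have : (0:ℝ) ≤ L N := by linarith
    have h7 : (0:ℝ) ≤ (L N) ^ p := Real.rpow_nonneg this p
    exact mul_nonneg h7 ENNReal.toReal_nonneg
  · filter_upwards [hev] with N hN
    obtain ⟨hN1, hl1, hc4, ht0s, hB1⟩ := hN
    obtain ⟨hδI, hNa⟩ := key N hN1 hl1 hc4 ht0s hB1
    have hLpn : (0:ℝ) ≤ (L N) ^ p := Real.rpow_nonneg (by linarith) p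
    have hb1 := hmeasBound N hN1 hδI
    have hb2 : Real.exp (-((N:ℝ) * a N)) ≤ Real.exp (-((N:ℝ) ^ ((1:ℝ)/2))) :=
      Real.exp_le_exp.mpr (neg_le_neg hNa)
    calc (L N) ^ p * (P N {ω | σ N ω ≤ ⨅ i, τ N i ω}).toReal
        ≤ (L N) ^ p * (A N + Real.exp (-((N:ℝ) * a N))) :=
          mul_le_mul_of_nonneg_left hb1 hLpn
      _ = (L N) ^ p * A N + (L N) ^ p * Real.exp (-((N:ℝ) * a N)) := by ring
      _ ≤ (L N) ^ p * A N + (L N) ^ p * Real.exp (-((N:ℝ) ^ ((1:ℝ)/2))) := by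
          exact add_le_add_right (mul_le_mul_of_nonneg_left hb2 hLpn) _
end
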